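/- Let R > 0, q > 0, b > 0, p > 0 and let f, Φ : ℝ → ℝ be differentiable at γ with f(γ) > 0, Φ(γ) < 1, f'(γ) > 0 and Φ'(γ) < 0. Then the function u(γ) = R q (1 − Φ(γ)) / ( b + p q (1 − Φ(γ))/f(γ) ) has strictly positive derivative at γ; i.e., the cross-layer energy-efficiency is strictly increasing in the SINR at such points. -/

import Mathlib

/-- The cross-layer energy-efficiency `u(γ) = Rq(1 - Φ(γ))/(b + pq(1 - Φ(γ))/f(γ))` is
strictly increasing in the SINR at any point `γ` where `f(γ) > 0`, `Φ(γ) < 1`,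
`f'(γ) > 0` and `Φ'(γ) < 0`. -/
theorem cross_layer_ee_increasing_in_sinr (R q b p : ℝ)
    (hR : 0 < R) (hq : 0 < q) (hb : 0 < b) (hp : 0 < p)
    (f Φ : ℝ → ℝ) (γ : ℝ)
    (hf : DifferentiableAt ℝ f γ) (hΦ : DifferentiableAt ℝ Φ γ)
    (hfpos : 0 < f γ) (hΦlt : Φ γ < 1)
    (hf' : 0 < deriv f γ) (hΦ' : deriv Φ γ < 0) :
    0 < deriv (fun x : ℝ => R * q * (1 - Φ x) / (b + p * q * (1 - Φ x) / f x)) γ := by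
  set a := Φ γ with ha
  set a' := deriv Φ γ with ha'
  set c := f γ with hc
  set c' := deriv f γ with hc'
  have hfne : c ≠ 0 := ne_of_gt hfpos
  have hΦd : HasDerivAt Φ a' γ := hΦ.hasDerivAt
  have hfd : HasDerivAt f c' γ := hf.hasDerivAt
  have hN : HasDerivAt (fun x => R * q * (1 - Φ x)) (R * q * (-a')) γ := by
    simpa using ((hasDerivAt_const γ (1:ℝ)).sub hΦd).const_mul (R * q)
  have hD : HasDerivAt (fun x => b + p * q * (1 - Φ x) / f x)
      ((p * q * (-a') * c - p * q * (1 - a) * c') / c ^ 2) γ := by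
    have h1 : HasDerivAt (fun x => p * q * (1 - Φ x)) (p * q * (-a')) γ := by
      simpa using ((hasDerivAt_const γ (1:ℝ)).sub hΦd).const_mul (p * q)
    simpa using ((h1.div hfd hfne).const_add b)
  have hDpos : 0 < b + p * q * (1 - a) / c := by
    have h1a : 0 < 1 - a := by linarith
    have : 0 < p * q * (1 - a) / c := by positivity
    linarith
  have hDne : b + p * q * (1 - a) / c ≠ 0 := ne_of_gt hDpos
  have hu : HasDerivAt (fun x : ℝ => R * q * (1 - Φ x) / (b + p * q * (1 - Φ x) / f x)) _ γ :=
    hN.div hD hDne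
  rw [hu.deriv]
  rw [div_pos_iff]
  left
  constructor
  · have key : R * q * (-a') * (b + p * q * (1 - a) / c) -
        R * q * (1 - a) * ((p * q * (-a') * c - p * q * (1 - a) * c') / c ^ 2)
        = R * q * (-a') * b + R * q * p * q * (1 - a) ^ 2 * c' / c ^ 2 := by
      field_simp
      ring
    rw [key]
    have h1 : 0 < R * q * (-a') * b := by
      have : 0 < -a' := by linarith
      positivity
    have h2 : 0 < R * q * p * q * (1 - a) ^ 2 * c' / c ^ 2 := by
      have h1a : 0 < 1 - a := by linarith
      positivity
    linarith
  · positivity
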